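/- Let F be a continuous nonnegative real-valued function defined on pairs (ω, v) of orthonormal unit vectors of ℝ³ (flags). Suppose H : ℝ³ → ℝ is positively homogeneous of degree 1, twice continuously differentiable on ℝ³ ∖ {0}, and for every unit vector ω and every pair of orthonormal vectors a, b orthogonal to ω, the function f(φ) = H(cos φ · a + sin φ · b) satisfies f(φ) + f''(φ) = F(ω, cos φ·a + sin φ·b) for all φ ∈ ℝ. Then: (i) H is convex and is the support function of the convex body B = {y ∈ ℝ³ : ⟨x, y⟩ ≤ H(x) for all x ∈ ℝ³}, i.e. H(x) = sup_{y ∈ B} ⟨x, y⟩ for all x; and (ii) if H' is any other function with the same properties (positively homogeneous of degree 1, C² away from 0, same great-circle equation with the same F), then there exists a₀ ∈ ℝ³ with H'(x) = H(x) + ⟨a₀, x⟩ for all x ∈ ℝ³. -/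

import Mathlib

open Real
open scoped RealInnerProductSpace

open Real
open scoped RealInnerProductSpace

noncomputable section
abbrev E3 := EuclideanSpace ℝ (Fin 3)

example (x y : E3) : ⟪x, y⟫ = ∑ i, x i * y i := by
  simp [PiLp.inner_apply, RCLike.inner_apply, conj_trivial]
  exact Finset.sum_congr rfl fun i _ => mul_comm _ _

lemma inner3 (x y : E3) : ⟪x, y⟫ = x 0 * y 0 + x 1 * y 1 + x 2 * y 2 := by
  simp [PiLp.inner_apply, RCLike.inner_apply, conj_trivial, Fin.sum_univ_three]
  ring

lemma norm_one_iff (x : E3) : ‖x‖ = 1 ↔ ⟪x, x⟫ = 1 := by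
  rw [real_inner_self_eq_norm_mul_norm]
  constructor
  · intro h; rw [h]; ring
  · intro h; nlinarith [norm_nonneg x]

lemma exists_pole (a b : E3) (ha : ‖a‖ = 1) (hb : ‖b‖ = 1) (hab : ⟪a, b⟫ = 0) :
    ∃ ω : E3, ‖ω‖ = 1 ∧ ⟪ω, a⟫ = 0 ∧ ⟪ω, b⟫ = 0 := by
  refine ⟨(WithLp.equiv 2 (Fin 3 → ℝ)).symm
    ![a 1 * b 2 - a 2 * b 1, a 2 * b 0 - a 0 * b 2, a 0 * b 1 - a 1 * b 0], ?_, ?_, ?_⟩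
  · rw [norm_one_iff] at *
    rw [inner3] at *
    simp only [WithLp.equiv_symm_apply, PiLp.toLp_apply, Matrix.cons_val_zero, Matrix.cons_val_one,
      Matrix.head_cons, Matrix.cons_val_two, Matrix.tail_cons]
    nlinarith [ha, hb, hab]
  · rw [norm_one_iff] at *
    rw [inner3] at *
    simp only [WithLp.equiv_symm_apply, PiLp.toLp_apply, Matrix.cons_val_zero, Matrix.cons_val_one,
      Matrix.head_cons, Matrix.cons_val_two, Matrix.tail_cons]
    ring
  · rw [norm_one_iff] at *
    rw [inner3] at *
    simp only [WithLp.equiv_symm_apply, PiLp.toLp_apply, Matrix.cons_val_zero, Matrix.cons_val_one,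
      Matrix.head_cons, Matrix.cons_val_two, Matrix.tail_cons]
    ring


lemma circle_norm (a b : E3) (ha : ‖a‖ = 1) (hb : ‖b‖ = 1) (hab : ⟪a, b⟫ = 0) (s : ℝ) :
    ‖Real.cos s • a + Real.sin s • b‖ = 1 := by
  have h : ‖Real.cos s • a + Real.sin s • b‖ ^ 2 = 1 := by
    rw [norm_add_sq_real]
    rw [real_inner_smul_left, real_inner_smul_right, hab]
    rw [norm_smul, norm_smul, ha, hb]
    simp only [Real.norm_eq_abs, mul_one]
    rw [sq_abs, sq_abs]
    nlinarith [Real.sin_sq_add_cos_sq s]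
  nlinarith [norm_nonneg (Real.cos s • a + Real.sin s • b)]

lemma circle_ne_zero (a b : E3) (ha : ‖a‖ = 1) (hb : ‖b‖ = 1) (hab : ⟪a, b⟫ = 0) (s : ℝ) :
    Real.cos s • a + Real.sin s • b ≠ 0 := by
  intro h
  have := circle_norm a b ha hb hab s
  rw [h] at this; simp at this

lemma circle_contDiff (H : E3 → ℝ) (hs : ContDiffOn ℝ 2 H {(0:E3)}ᶜ)
    (a b : E3) (ha : ‖a‖ = 1) (hb : ‖b‖ = 1) (hab : ⟪a, b⟫ = 0) :
    ContDiff ℝ 2 (fun s : ℝ => H (Real.cos s • a + Real.sin s • b)) := by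
  rw [← contDiffOn_univ]
  have hc : ContDiffOn ℝ 2 (fun s : ℝ => Real.cos s • a + Real.sin s • b) Set.univ := by
    exact ((Real.contDiff_cos.smul contDiff_const).add
      (Real.contDiff_sin.smul contDiff_const)).contDiffOn
  exact hs.comp hc (fun s _ => circle_ne_zero a b ha hb hab s)


lemma cd2_diff {f : ℝ → ℝ} (h : ContDiff ℝ 2 f) : Differentiable ℝ f :=
  h.differentiable two_ne_zero

lemma cd2_deriv {f : ℝ → ℝ} (h : ContDiff ℝ 2 f) : ContDiff ℝ 1 (deriv f) := by
  have := (contDiff_succ_iff_deriv (n := 1)).mp (by exact_mod_cast h)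
  exact this.2.2

lemma cd2_deriv_diff {f : ℝ → ℝ} (h : ContDiff ℝ 2 f) : Differentiable ℝ (deriv f) :=
  (cd2_deriv h).differentiable one_ne_zero

lemma cd2_deriv2_cont {f : ℝ → ℝ} (h : ContDiff ℝ 2 f) : Continuous (deriv (deriv f)) := by
  have h1 := cd2_deriv h
  have := (contDiff_succ_iff_deriv (n := 0)).mp (by exact_mod_cast h1)
  exact this.2.2.continuous

lemma ode_unique {f : ℝ → ℝ} (h : ContDiff ℝ 2 f)
    (he : ∀ x, f x + deriv (deriv f) x = 0) :
    ∀ x, f x = f 0 * Real.cos x + deriv f 0 * Real.sin x := by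
  set A := f 0 with hA
  set B := deriv f 0 with hB
  set t : ℝ → ℝ := fun x => A * Real.cos x + B * Real.sin x with ht
  have hdt : ∀ x, HasDerivAt t (-A * Real.sin x + B * Real.cos x) x := by
    intro x
    have h1 := (Real.hasDerivAt_cos x).const_mul A
    have h2 := (Real.hasDerivAt_sin x).const_mul B
    exact (h1.add h2).congr_deriv (by ring)
  have hdt' : ∀ x, HasDerivAt (fun x => -A * Real.sin x + B * Real.cos x)
      (-(A * Real.cos x + B * Real.sin x)) x := by
    intro x
    have h1 := (Real.hasDerivAt_sin x).const_mul (-A)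
    have h2 := (Real.hasDerivAt_cos x).const_mul B
    exact (h1.add h2).congr_deriv (by ring)
  set g : ℝ → ℝ := fun x => f x - t x with hg
  have hdg : ∀ x, HasDerivAt g (deriv f x - (-A * Real.sin x + B * Real.cos x)) x :=
    fun x => ((cd2_diff h x).hasDerivAt).sub (hdt x)
  have hg' : deriv g = fun x => deriv f x - (-A * Real.sin x + B * Real.cos x) :=
    funext fun x => (hdg x).deriv
  have hdg2 : ∀ x, HasDerivAt (deriv g) (deriv (deriv f) x + (A * Real.cos x + B * Real.sin x)) x := by
    intro x
    rw [hg']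
    have := ((cd2_deriv_diff h x).hasDerivAt).sub (hdt' x)
    exact this.congr_deriv (by ring)
  have hgg : ∀ x, deriv (deriv g) x = -g x := by
    intro x
    rw [(hdg2 x).deriv]
    have := he x
    simp only [hg, ht]
    linarith
  have hgd : ∀ x, HasDerivAt g (deriv g x) x := by
    intro x; rw [hg']; exact hdg x
  have hgd2 : ∀ x, HasDerivAt (deriv g) (deriv (deriv g) x) x := by
    intro x
    have v := hdg2 x
    have hv : deriv (deriv g) x = deriv (deriv f) x + (A * Real.cos x + B * Real.sin x) := v.deriv
    rw [hv]; exact v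
  set E : ℝ → ℝ := fun x => g x ^ 2 + deriv g x ^ 2 with hE
  have hdE : ∀ x, HasDerivAt E 0 x := by
    intro x
    have h1 := (hgd x).pow 2
    have h2 := (hgd2 x).pow 2
    have h3 := h1.add h2
    exact h3.congr_deriv (by rw [hgg x]; ring)
  have hEconst : ∀ x, E x = E 0 := by
    intro x
    exact is_const_of_deriv_eq_zero (fun y => (hdE y).differentiableAt)
      (fun y => (hdE y).deriv) x 0
  have hE0 : E 0 = 0 := by
    have hg0 : g 0 = 0 := by simp [hg, ht, hA]
    have hg'0 : deriv g 0 = 0 := by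
      rw [hg']; simp [hB]
    simp [hE, hg0, hg'0]
  intro x
  have hEx := hEconst x
  rw [hE0] at hEx
  have : g x = 0 := by
    have h1 : g x ^ 2 + deriv g x ^ 2 = 0 := hEx
    nlinarith [sq_nonneg (g x), sq_nonneg (deriv g x)]
  have := this
  simp only [hg, ht] at this
  linarith

lemma max_principle {u : ℝ → ℝ} (hu : ContDiff ℝ 2 u) {α β : ℝ} (hαβ : α < β)
    (hlen : β - α < π) (h0 : u α = 0) (h1 : u β = 0)
    (hq : ∀ x ∈ Set.Icc α β, 0 ≤ u x + deriv (deriv u) x) :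
    ∀ x ∈ Set.Icc α β, u x ≤ 0 := by
  by_contra hcon
  push_neg at hcon
  obtain ⟨x₀, hx₀, hx₀pos⟩ := hcon
  set lam : ℝ := (1 + π / (β - α)) / 2 with hlam
  have hβα : 0 < β - α := by linarith
  have hπr : 1 < π / (β - α) := (one_lt_div hβα).mpr hlen
  have hlam1 : 1 < lam := by rw [hlam]; linarith
  have hlamlt : lam * (β - α) < π := by
    have hcancel : π / (β - α) * (β - α) = π := div_mul_cancel₀ _ (ne_of_gt hβα)
    rw [hlam]
    nlinarith
  set m : ℝ := (α + β) / 2 with hm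
  have hinner : Continuous (fun φ : ℝ => lam * (φ - m)) :=
    continuous_const.mul (continuous_id.sub continuous_const)
  set c : ℝ → ℝ := fun φ => Real.cos (lam * (φ - m)) with hc
  have hcpos : ∀ φ ∈ Set.Icc α β, 0 < c φ := by
    intro φ hφ
    apply Real.cos_pos_of_mem_Ioo
    constructor
    · have : lam * (φ - m) ≥ lam * (α - m) := by
        apply mul_le_mul_of_nonneg_left _ (by linarith : (0:ℝ) ≤ lam)
        linarith [hφ.1]
      have hαm : α - m = -((β - α)/2) := by rw [hm]; ring
      nlinarith [hφ.1]
    · have hβm : β - m = (β - α)/2 := by rw [hm]; ring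
      nlinarith [hφ.2]
  -- derivatives of c
  have hdc : ∀ φ, HasDerivAt c (-lam * Real.sin (lam * (φ - m))) φ := by
    intro φ
    have hl : HasDerivAt (fun φ : ℝ => lam * (φ - m)) lam φ := by
      simpa using ((hasDerivAt_id φ).sub_const m).const_mul lam
    have := (Real.hasDerivAt_cos (lam * (φ - m))).comp φ hl
    exact this.congr_deriv (by ring)
  have hdc2 : ∀ φ, HasDerivAt (fun φ => -lam * Real.sin (lam * (φ - m)))
      (-lam ^ 2 * Real.cos (lam * (φ - m))) φ := by
    intro φ
    have hl : HasDerivAt (fun φ : ℝ => lam * (φ - m)) lam φ := by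
      simpa using ((hasDerivAt_id φ).sub_const m).const_mul lam
    have := ((Real.hasDerivAt_sin (lam * (φ - m))).comp φ hl).const_mul (-lam)
    exact this.congr_deriv (by ring)
  -- max of ratio
  have hψcont : ContinuousOn (fun φ => u φ / c φ) (Set.Icc α β) := by
    apply ContinuousOn.div (hu.continuous.continuousOn)
    · exact (Real.continuous_cos.comp hinner).continuousOn
    · intro φ hφ; exact ne_of_gt (hcpos φ hφ)
  obtain ⟨φ₀, hφ₀mem, hφ₀max⟩ := (isCompact_Icc).exists_isMaxOn
    (Set.nonempty_Icc.mpr (le_of_lt hαβ)) hψcont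
  set M : ℝ := u φ₀ / c φ₀ with hM
  have hMpos : 0 < M := by
    have := hφ₀max hx₀
    have h2 : 0 < u x₀ / c x₀ := div_pos hx₀pos (hcpos x₀ hx₀)
    exact lt_of_lt_of_le h2 this
  have hφ₀α : φ₀ ≠ α := by
    intro h; rw [hM, h, h0] at hMpos; simp at hMpos
  have hφ₀β : φ₀ ≠ β := by
    intro h; rw [hM, h, h1] at hMpos; simp at hMpos
  have hφ₀Ioo : φ₀ ∈ Set.Ioo α β :=
    ⟨lt_of_le_of_ne hφ₀mem.1 (Ne.symm hφ₀α), lt_of_le_of_ne hφ₀mem.2 hφ₀β⟩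
  set v : ℝ → ℝ := fun φ => u φ - M * c φ with hv
  have hvle : ∀ φ ∈ Set.Icc α β, v φ ≤ 0 := by
    intro φ hφ
    have := hφ₀max hφ
    have hcφ := hcpos φ hφ
    rw [hv]
    simp only
    rw [sub_nonpos]
    calc u φ = (u φ / c φ) * c φ := by field_simp
    _ ≤ M * c φ := by
      apply mul_le_mul_of_nonneg_right this (le_of_lt hcφ)
  have hvφ₀ : v φ₀ = 0 := by
    have hc0 : c φ₀ ≠ 0 := ne_of_gt (hcpos φ₀ hφ₀mem)
    rw [hv]; simp only; rw [hM]
    field_simp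
    ring
  -- derivatives of v
  have hdv : ∀ φ, HasDerivAt v (deriv u φ - M * (-lam * Real.sin (lam * (φ - m)))) φ :=
    fun φ => ((cd2_diff hu φ).hasDerivAt).sub ((hdc φ).const_mul M)
  have hv' : deriv v = fun φ => deriv u φ - M * (-lam * Real.sin (lam * (φ - m))) :=
    funext fun φ => (hdv φ).deriv
  have hdv2 : ∀ φ, HasDerivAt (deriv v)
      (deriv (deriv u) φ - M * (-lam ^ 2 * Real.cos (lam * (φ - m)))) φ := by
    intro φ
    rw [hv']
    exact ((cd2_deriv_diff hu φ).hasDerivAt).sub ((hdc2 φ).const_mul M)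
  have hv'' : ∀ φ, deriv (deriv v) φ
      = deriv (deriv u) φ + M * lam ^ 2 * Real.cos (lam * (φ - m)) := by
    intro φ
    rw [(hdv2 φ).deriv]; ring
  have hv''cont : Continuous (deriv (deriv v)) := by
    have : Continuous (fun φ => deriv (deriv u) φ + M * lam ^ 2 * Real.cos (lam * (φ - m))) := by
      apply (cd2_deriv2_cont hu).add
      exact continuous_const.mul (Real.continuous_cos.comp hinner)
    convert this using 1
    exact funext hv''
  have hv''φ₀ : 0 < deriv (deriv v) φ₀ := by
    rw [hv'' φ₀]
    have hq₀ := hq φ₀ hφ₀mem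
    have hcφ₀ := hcpos φ₀ hφ₀mem
    have huφ₀ : u φ₀ = M * c φ₀ := by
      have h5 := hvφ₀; rw [hv] at h5; simp only at h5; linarith
    have hceq : c φ₀ = Real.cos (lam * (φ₀ - m)) := rfl
    have key : 0 < M * (lam ^ 2 - 1) * c φ₀ := by
      apply mul_pos (mul_pos hMpos (by nlinarith)) hcφ₀
    rw [← hceq]
    nlinarith [hq₀, huφ₀, key]
  -- local max ⇒ deriv v φ₀ = 0
  have hlocmax : IsLocalMax v φ₀ := by
    have hnhds : Set.Icc α β ∈ nhds φ₀ := Icc_mem_nhds hφ₀Ioo.1 hφ₀Ioo.2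
    filter_upwards [hnhds] with x hx
    rw [hvφ₀]
    exact hvle x hx
  have hdvφ₀ : deriv v φ₀ = 0 := hlocmax.deriv_eq_zero
  have hdiffdv : Differentiable ℝ (deriv v) := fun y => (hdv2 y).differentiableAt
  have hdiffv : Differentiable ℝ v := fun y => (hdv y).differentiableAt
  -- find δ
  obtain ⟨δ, hδpos, hδ⟩ : ∃ δ > 0, ∀ y : ℝ, |y - φ₀| < δ → 0 < deriv (deriv v) y := by
    have h := hv''cont.continuousAt (x := φ₀)
    rw [Metric.continuousAt_iff] at h
    obtain ⟨δ, hδpos, hδ⟩ := h (deriv (deriv v) φ₀) hv''φ₀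
    refine ⟨δ, hδpos, fun y hy => ?_⟩
    have h2 := hδ (show dist y φ₀ < δ by rwa [Real.dist_eq])
    rw [Real.dist_eq] at h2
    have h3 := abs_lt.mp h2
    linarith [h3.1]
  set ε : ℝ := min (δ / 2) (β - φ₀) with hε
  have hεpos : 0 < ε := lt_min (by linarith) (by linarith [hφ₀Ioo.2])
  have hεIcc : φ₀ + ε ≤ β := by
    have : ε ≤ β - φ₀ := min_le_right _ _
    linarith
  have hderivpos : ∀ x ∈ Set.Ioo φ₀ (φ₀ + ε), 0 < deriv v x := by
    intro x hx
    have hmono : StrictMonoOn (deriv v) (Set.Icc φ₀ (φ₀ + ε)) := by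
      apply strictMonoOn_of_deriv_pos (convex_Icc _ _) hdiffdv.continuous.continuousOn
      intro y hy
      rw [interior_Icc] at hy
      apply hδ
      rw [abs_lt]
      have h2 : ε ≤ δ / 2 := min_le_left _ _
      constructor
      · linarith [hy.1]
      · linarith [hy.2]
    have := hmono ⟨le_refl _, by linarith [hx.2]⟩ ⟨le_of_lt hx.1, le_of_lt hx.2⟩ hx.1
    rw [hdvφ₀] at this
    exact this
  have hvmono : StrictMonoOn v (Set.Icc φ₀ (φ₀ + ε/2)) := by
    apply strictMonoOn_of_deriv_pos (convex_Icc _ _) hdiffv.continuous.continuousOn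
    intro y hy
    rw [interior_Icc] at hy
    exact hderivpos y ⟨hy.1, by linarith [hy.2]⟩
  have hfinal := hvmono ⟨le_refl _, by linarith⟩ ⟨by linarith, le_refl _⟩ (by linarith)
  rw [hvφ₀] at hfinal
  have := hvle (φ₀ + ε/2) ⟨by linarith [hφ₀Ioo.1], by linarith⟩
  linarith

lemma norm_comb_sq (a b : E3) (ha : ‖a‖ = 1) (hb : ‖b‖ = 1) (hab : ⟪a, b⟫ = 0) (p q : ℝ) :
    ‖p • a + q • b‖ ^ 2 = p ^ 2 + q ^ 2 := by
  rw [norm_add_sq_real]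
  rw [real_inner_smul_left, real_inner_smul_right, hab]
  rw [norm_smul, norm_smul, ha, hb]
  simp only [Real.norm_eq_abs, mul_one, mul_zero]
  rw [sq_abs, sq_abs]
  ring

set_option maxHeartbeats 1000000 in
lemma sublinear_indep
    (F : E3 → E3 → ℝ)
    (hFnonneg : ∀ ω v : E3, ‖ω‖ = 1 → ‖v‖ = 1 → ⟪ω, v⟫ = 0 → 0 ≤ F ω v)
    (H : E3 → ℝ)
    (hhom : ∀ t : ℝ, 0 ≤ t → ∀ x : E3, H (t • x) = t * H x)
    (hsmooth : ContDiffOn ℝ 2 H {(0 : E3)}ᶜ)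
    (heq : ∀ ω a b : E3, ‖ω‖ = 1 → ‖a‖ = 1 → ‖b‖ = 1 →
      ⟪ω, a⟫ = 0 → ⟪ω, b⟫ = 0 → ⟪a, b⟫ = 0 →
      ∀ φ : ℝ,
        H (Real.cos φ • a + Real.sin φ • b) +
          deriv (deriv (fun s : ℝ => H (Real.cos s • a + Real.sin s • b))) φ =
        F ω (Real.cos φ • a + Real.sin φ • b))
    (x y : E3) (hx : x ≠ 0) (hind : ∀ c : ℝ, y ≠ c • x) :
    H (x + y) ≤ H x + H y := by
  have hy : y ≠ 0 := by
    intro h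
    have h0 : (0:ℝ) • x = 0 := zero_smul ℝ x
    exact hind 0 (h.trans h0.symm)
  set r₁ : ℝ := ‖x‖ with hr₁
  have hr₁pos : 0 < r₁ := norm_pos_iff.mpr hx
  clear_value r₁
  set a : E3 := r₁⁻¹ • x with haa
  have ha : ‖a‖ = 1 := by
    rw [haa, norm_smul, norm_inv, Real.norm_eq_abs, abs_of_pos hr₁pos, ← hr₁,
      inv_mul_cancel₀ (ne_of_gt hr₁pos)]
  have hxa : x = r₁ • a := by
    rw [haa, smul_smul, mul_inv_cancel₀ (ne_of_gt hr₁pos), one_smul]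
  clear_value a
  set p : ℝ := ⟪a, y⟫ with hp
  clear_value p
  set b₀ : E3 := y - p • a with hb₀
  have hb₀ne : b₀ ≠ 0 := by
    intro h
    have : y = p • a := by rwa [hb₀, sub_eq_zero] at h
    rw [haa, smul_smul] at this
    exact hind (p * r₁⁻¹) this
  set q : ℝ := ‖b₀‖ with hq
  have hqpos : 0 < q := norm_pos_iff.mpr hb₀ne
  clear_value q b₀
  set b : E3 := q⁻¹ • b₀ with hbb
  have hb : ‖b‖ = 1 := by
    rw [hbb, norm_smul, norm_inv, Real.norm_eq_abs, abs_of_pos hqpos, ← hq,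
      inv_mul_cancel₀ (ne_of_gt hqpos)]
  have hab : ⟪a, b⟫ = 0 := by
    rw [hbb, real_inner_smul_right, hb₀, inner_sub_right, real_inner_smul_right,
      real_inner_self_eq_norm_mul_norm, ha]
    simp [← hp]
  have hqb : q • b = b₀ := by
    rw [hbb, smul_smul, mul_inv_cancel₀ (ne_of_gt hqpos), one_smul]
  clear_value b
  have hyab : y = p • a + q • b := by
    rw [hqb, hb₀]; abel
  set r₂ : ℝ := ‖y‖ with hr₂
  have hr₂pos : 0 < r₂ := norm_pos_iff.mpr hy
  clear_value r₂
  have hr₂sq : r₂ ^ 2 = p ^ 2 + q ^ 2 := by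
    rw [hr₂, hyab]; exact norm_comb_sq a b ha hb hab p q
  have hpr₂ : |p| < r₂ := by
    have h1 : |p| ^ 2 < r₂ ^ 2 := by rw [sq_abs]; nlinarith
    exact lt_of_pow_lt_pow_left₀ 2 (le_of_lt hr₂pos) h1
  have hpr₂' := abs_lt.mp hpr₂
  set θ : ℝ := Real.arccos (p / r₂) with hθ
  clear_value θ
  have hpdiv1 : p / r₂ < 1 := by rw [div_lt_one hr₂pos]; linarith
  have hpdiv2 : -1 < p / r₂ := by rw [lt_div_iff₀ hr₂pos]; linarith
  have hθpos : 0 < θ := by rw [hθ]; exact Real.arccos_pos.mpr hpdiv1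
  have hθltπ : θ < π := by
    rw [hθ]
    refine lt_of_le_of_ne (Real.arccos_le_pi _) (fun h => ?_)
    have := Real.arccos_eq_pi.mp h
    linarith
  have hcosθ : Real.cos θ = p / r₂ := by
    rw [hθ]; exact Real.cos_arccos (le_of_lt hpdiv2) (le_of_lt hpdiv1)
  have hsinθ : Real.sin θ = q / r₂ := by
    rw [hθ, Real.sin_arccos]
    have e : 1 - (p / r₂) ^ 2 = (q / r₂) ^ 2 := by
      field_simp
      linarith [hr₂sq]
    rw [e]
    exact Real.sqrt_sq (le_of_lt (div_pos hqpos hr₂pos))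
  have hyab2 : y = r₂ • (Real.cos θ • a + Real.sin θ • b) := by
    have e1 : r₂ * Real.cos θ = p := by rw [hcosθ]; field_simp
    have e2 : r₂ * Real.sin θ = q := by rw [hsinθ]; field_simp
    rw [smul_add, smul_smul, smul_smul, e1, e2]
    exact hyab
  -- sum
  have hsum : x + y = (r₁ + p) • a + q • b := by
    rw [hxa, hyab, add_smul]; abel
  set ρ : ℝ := ‖x + y‖ with hρ
  have hρsq : ρ ^ 2 = (r₁ + p) ^ 2 + q ^ 2 := by
    rw [hρ, hsum]; exact norm_comb_sq a b ha hb hab _ _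
  have hρpos : 0 < ρ := by
    have h1 : 0 < ρ ^ 2 := by nlinarith
    have h2 : 0 ≤ ρ := by rw [hρ]; exact norm_nonneg _
    nlinarith
  clear_value ρ
  have hrpρ : |r₁ + p| < ρ := by
    have h1 : |r₁ + p| ^ 2 < ρ ^ 2 := by rw [sq_abs]; nlinarith
    exact lt_of_pow_lt_pow_left₀ 2 (le_of_lt hρpos) h1
  have hrpρ' := abs_lt.mp hrpρ
  set σ : ℝ := Real.arccos ((r₁ + p) / ρ) with hσ
  clear_value σ
  have hsdiv1 : (r₁ + p) / ρ < 1 := by rw [div_lt_one hρpos]; linarith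
  have hsdiv2 : -1 < (r₁ + p) / ρ := by rw [lt_div_iff₀ hρpos]; linarith
  have hσpos : 0 < σ := by rw [hσ]; exact Real.arccos_pos.mpr hsdiv1
  have hσltπ : σ < π := by
    rw [hσ]
    refine lt_of_le_of_ne (Real.arccos_le_pi _) (fun h => ?_)
    have := Real.arccos_eq_pi.mp h
    linarith
  have hcosσ : Real.cos σ = (r₁ + p) / ρ := by
    rw [hσ]; exact Real.cos_arccos (le_of_lt hsdiv2) (le_of_lt hsdiv1)
  have hsinσ : Real.sin σ = q / ρ := by
    rw [hσ, Real.sin_arccos]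
    have e : 1 - ((r₁ + p) / ρ) ^ 2 = (q / ρ) ^ 2 := by
      field_simp
      linarith [hρsq]
    rw [e]
    exact Real.sqrt_sq (le_of_lt (div_pos hqpos hρpos))
  have hsumσ : x + y = ρ • (Real.cos σ • a + Real.sin σ • b) := by
    have e1 : ρ * Real.cos σ = r₁ + p := by rw [hcosσ]; field_simp
    have e2 : ρ * Real.sin σ = q := by rw [hsinσ]; field_simp
    rw [smul_add, smul_smul, smul_smul, e1, e2]
    exact hsum
  -- σ < θ
  have hsinθσ : Real.sin (θ - σ) = q * r₁ / (r₂ * ρ) := by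
    rw [Real.sin_sub, hsinθ, hcosσ, hcosθ, hsinσ]
    field_simp
    ring
  have hσθ : σ < θ := by
    by_contra hcon
    push_neg at hcon
    have h1 : θ - σ ≤ 0 := by linarith
    have h2 : -π ≤ θ - σ := by linarith
    have h3 : Real.sin (θ - σ) ≤ 0 := Real.sin_nonpos_of_nonpos_of_neg_pi_le h1 h2
    rw [hsinθσ] at h3
    have : 0 < q * r₁ / (r₂ * ρ) := div_pos (mul_pos hqpos hr₁pos) (mul_pos hr₂pos hρpos)
    linarith
  -- the great circle function
  obtain ⟨ω, hω1, hωa, hωb⟩ := exists_pole a b ha hb hab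
  set g : ℝ → ℝ := fun s : ℝ => H (Real.cos s • a + Real.sin s • b) with hgdef
  have hg2 : ContDiff ℝ 2 g := circle_contDiff H hsmooth a b ha hb hab
  have hgF : ∀ φ : ℝ, g φ + deriv (deriv g) φ = F ω (Real.cos φ • a + Real.sin φ • b) :=
    heq ω a b hω1 ha hb hωa hωb hab
  set u : ℝ → ℝ := fun φ => g φ * Real.sin θ - g 0 * Real.sin (θ - φ) - g θ * Real.sin φ
    with hudef
  have hu2 : ContDiff ℝ 2 u := by
    apply ContDiff.sub
    apply ContDiff.sub
    · exact hg2.mul contDiff_const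
    · exact contDiff_const.mul (Real.contDiff_sin.comp (contDiff_const.sub contDiff_id))
    · exact contDiff_const.mul Real.contDiff_sin
  -- derivatives of u
  have hds1 : ∀ φ : ℝ, HasDerivAt (fun φ => Real.sin (θ - φ)) (-Real.cos (θ - φ)) φ := by
    intro φ
    have hlin : HasDerivAt (fun φ : ℝ => θ - φ) (-1) φ := by
      simpa using (hasDerivAt_id φ).const_sub θ
    have := (Real.hasDerivAt_sin (θ - φ)).comp φ hlin
    exact this.congr_deriv (by ring)
  have hds2 : ∀ φ : ℝ, HasDerivAt (fun φ => -Real.cos (θ - φ)) (-Real.sin (θ - φ)) φ := by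
    intro φ
    have hlin : HasDerivAt (fun φ : ℝ => θ - φ) (-1) φ := by
      simpa using (hasDerivAt_id φ).const_sub θ
    have := ((Real.hasDerivAt_cos (θ - φ)).comp φ hlin).neg
    exact this.congr_deriv (by ring)
  have hdu : ∀ φ, HasDerivAt u
      (deriv g φ * Real.sin θ - g 0 * (-Real.cos (θ - φ)) - g θ * Real.cos φ) φ := by
    intro φ
    exact (((cd2_diff hg2 φ).hasDerivAt.mul_const _).sub ((hds1 φ).const_mul (g 0))).sub
      ((Real.hasDerivAt_sin φ).const_mul (g θ))
  have hu' : deriv u = fun φ =>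
      deriv g φ * Real.sin θ - g 0 * (-Real.cos (θ - φ)) - g θ * Real.cos φ :=
    funext fun φ => (hdu φ).deriv
  have hdu2 : ∀ φ, deriv (deriv u) φ
      = deriv (deriv g) φ * Real.sin θ + g 0 * Real.sin (θ - φ) + g θ * Real.sin φ := by
    intro φ
    rw [hu']
    have h1 : HasDerivAt (fun φ =>
        deriv g φ * Real.sin θ - g 0 * (-Real.cos (θ - φ)) - g θ * Real.cos φ)
        (deriv (deriv g) φ * Real.sin θ - g 0 * (-Real.sin (θ - φ)) - g θ * (-Real.sin φ)) φ := by
      exact (((cd2_deriv_diff hg2 φ).hasDerivAt.mul_const _).sub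
        ((hds2 φ).const_mul (g 0))).sub ((Real.hasDerivAt_cos φ).const_mul (g θ))
    rw [h1.deriv]; ring
  have hsinθpos : 0 < Real.sin θ := Real.sin_pos_of_pos_of_lt_pi hθpos hθltπ
  have huq : ∀ φ ∈ Set.Icc 0 θ, 0 ≤ u φ + deriv (deriv u) φ := by
    intro φ _
    rw [hdu2 φ]
    have hF := hFnonneg ω (Real.cos φ • a + Real.sin φ • b) hω1
      (circle_norm a b ha hb hab φ)
      (by rw [inner_add_right, real_inner_smul_right, real_inner_smul_right, hωa, hωb]; ring)
    have := hgF φ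
    have key : u φ + (deriv (deriv g) φ * Real.sin θ + g 0 * Real.sin (θ - φ)
        + g θ * Real.sin φ) = (g φ + deriv (deriv g) φ) * Real.sin θ := by
      rw [hudef]; ring
    rw [key, this]
    exact mul_nonneg hF (le_of_lt hsinθpos)
  have hu0 : u 0 = 0 := by rw [hudef]; simp
  have huθ : u θ = 0 := by rw [hudef]; simp
  have hMP := max_principle hu2 (show (0:ℝ) < θ from hθpos) (by rw [sub_zero]; linarith)
    hu0 huθ huq
  have huσ := hMP σ ⟨le_of_lt hσpos, le_of_lt hσθ⟩
  simp only [hudef] at huσ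
  have hHxy : H (x + y) = ρ * g σ := by
    rw [hsumσ, hhom ρ hρpos.le]
  have hHx : H x = r₁ * g 0 := by
    rw [hxa, hhom r₁ hr₁pos.le, hgdef]
    simp
  have hHy : H y = r₂ * g θ := by
    rw [hyab2, hhom r₂ hr₂pos.le]
  have hcq : 0 < r₂ * ρ / q := div_pos (mul_pos hr₂pos hρpos) hqpos
  have hmul := mul_le_mul_of_nonneg_right
    (show g σ * Real.sin θ ≤ g 0 * Real.sin (θ - σ) + g θ * Real.sin σ by linarith) hcq.le
  have lhs_eq : g σ * Real.sin θ * (r₂ * ρ / q) = ρ * g σ := by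
    rw [hsinθ]; field_simp
  have rhs_eq : (g 0 * Real.sin (θ - σ) + g θ * Real.sin σ) * (r₂ * ρ / q)
      = r₁ * g 0 + r₂ * g θ := by
    rw [hsinθσ, hsinσ]; field_simp
  rw [hHxy, hHx, hHy]
  rw [lhs_eq, rhs_eq] at hmul
  linarith

lemma exists_ortho (x : E3) (hx : x ≠ 0) : ∃ z : E3, z ≠ 0 ∧ ⟪x, z⟫ = 0 := by
  have h2 : Module.finrank ℝ (ℝ ∙ x) + Module.finrank ℝ (ℝ ∙ x)ᗮ = Module.finrank ℝ E3 :=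
    Submodule.finrank_add_finrank_orthogonal (K := ℝ ∙ x)
  have h1 : Module.finrank ℝ (ℝ ∙ x) = 1 := finrank_span_singleton hx
  have h3 : Module.finrank ℝ E3 = 3 := by
    simp [finrank_euclideanSpace]
  have h4 : (ℝ ∙ x)ᗮ ≠ ⊥ := by
    intro h
    rw [h, h1, h3] at h2
    simp at h2
  obtain ⟨z, hz_mem, hzne⟩ := Submodule.exists_mem_ne_zero_of_ne_bot h4
  refine ⟨z, hzne, ?_⟩
  exact (Submodule.mem_orthogonal _ _).mp hz_mem x (Submodule.mem_span_singleton_self x)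

lemma H_zero (H : E3 → ℝ) (hhom : ∀ t : ℝ, 0 ≤ t → ∀ x : E3, H (t • x) = t * H x) :
    H 0 = 0 := by
  have := hhom 0 le_rfl 0
  rwa [zero_smul, zero_mul] at this

set_option maxHeartbeats 1000000 in
lemma sublinear_all
    (F : E3 → E3 → ℝ)
    (hFnonneg : ∀ ω v : E3, ‖ω‖ = 1 → ‖v‖ = 1 → ⟪ω, v⟫ = 0 → 0 ≤ F ω v)
    (H : E3 → ℝ)
    (hhom : ∀ t : ℝ, 0 ≤ t → ∀ x : E3, H (t • x) = t * H x)
    (hsmooth : ContDiffOn ℝ 2 H {(0 : E3)}ᶜ)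
    (heq : ∀ ω a b : E3, ‖ω‖ = 1 → ‖a‖ = 1 → ‖b‖ = 1 →
      ⟪ω, a⟫ = 0 → ⟪ω, b⟫ = 0 → ⟪a, b⟫ = 0 →
      ∀ φ : ℝ,
        H (Real.cos φ • a + Real.sin φ • b) +
          deriv (deriv (fun s : ℝ => H (Real.cos s • a + Real.sin s • b))) φ =
        F ω (Real.cos φ • a + Real.sin φ • b)) :
    ∀ x y : E3, H (x + y) ≤ H x + H y := by
  have hH0 : H 0 = 0 := H_zero H hhom
  -- key: H x + H (-x) ≥ 0 for x ≠ 0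
  have hneg : ∀ x : E3, x ≠ 0 → 0 ≤ H x + H (-x) := by
    intro x hx
    obtain ⟨z, hzne, hxz⟩ := exists_ortho x hx
    have hxne' : -x ≠ 0 := neg_ne_zero.mpr hx
    -- continuity of H at -x
    have hHcont : ContinuousAt H (-x) := by
      have hopen : IsOpen ({(0:E3)}ᶜ) := isOpen_compl_singleton
      exact (hsmooth.continuousOn.continuousAt (hopen.mem_nhds hxne'))
    have hcont1 : Filter.Tendsto (fun ε : ℝ => H x + H (-x + ε • z)) (nhdsWithin 0 (Set.Ioi 0))
        (nhds (H x + H (-x))) := by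
      have hc : ContinuousAt (fun ε : ℝ => H (-x + ε • z)) 0 := by
        have hcurve : ContinuousAt (fun ε : ℝ => -x + ε • z) 0 :=
          (continuous_const.add (continuous_id.smul continuous_const)).continuousAt
        exact ContinuousAt.comp (by simpa using hHcont) hcurve
      have hc2 : ContinuousAt (fun ε : ℝ => H x + H (-x + ε • z)) 0 :=
        continuousAt_const.add hc
      have h3 := hc2.tendsto
      simp only [zero_smul, add_zero] at h3
      exact h3.mono_left nhdsWithin_le_nhds
    have hcont2 : Filter.Tendsto (fun ε : ℝ => H (x + (-x + ε • z)))
        (nhdsWithin 0 (Set.Ioi 0)) (nhds 0) := by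
      have heq2 : ∀ ε ∈ Set.Ioi (0:ℝ), H (x + (-x + ε • z)) = ε * H z := by
        intro ε hε
        have : x + (-x + ε • z) = ε • z := by abel
        rw [this, hhom ε (le_of_lt hε)]
      have hlim : Filter.Tendsto (fun ε : ℝ => ε * H z) (nhdsWithin 0 (Set.Ioi 0)) (nhds 0) := by
        have hcm : Continuous (fun ε : ℝ => ε * H z) := continuous_id.mul continuous_const
        have h4 := (hcm.tendsto (0:ℝ)).mono_left (nhdsWithin_le_nhds (s := Set.Ioi (0:ℝ)))
        simpa using h4
      exact Filter.Tendsto.congr' (by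
        filter_upwards [self_mem_nhdsWithin] with ε hε
        exact (heq2 ε hε).symm) hlim
    have hineq : ∀ ε ∈ Set.Ioi (0:ℝ), H (x + (-x + ε • z)) ≤ H x + H (-x + ε • z) := by
      intro ε hε
      apply sublinear_indep F hFnonneg H hhom hsmooth heq x (-x + ε • z) hx
      intro c hc
      have h1 : ε • z = (c + 1) • x := by
        have : -x + ε • z + x = c • x + x := by rw [hc]
        rw [add_smul, one_smul] at *
        calc ε • z = -x + ε • z + x := by abel
        _ = c • x + x := this
      have h2 : ⟪x, ε • z⟫ = (c+1) * ‖x‖^2 := by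
        rw [h1, real_inner_smul_right, real_inner_self_eq_norm_sq]
      rw [real_inner_smul_right, hxz, mul_zero] at h2
      have hc1 : c + 1 = 0 := by
        have hn2 : 0 < ‖x‖ ^ 2 := pow_pos (norm_pos_iff.mpr hx) 2
        exact (mul_eq_zero.mp h2.symm).resolve_right (ne_of_gt hn2)
      rw [hc1, zero_smul] at h1
      exact hzne (by simpa [ne_of_gt (Set.mem_Ioi.mp hε)] using h1)
    exact le_of_tendsto_of_tendsto hcont2 hcont1 (by
      filter_upwards [self_mem_nhdsWithin] with ε hε
      exact hineq ε hε)
  -- now the general case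
  intro x y
  by_cases hx : x = 0
  · rw [hx, zero_add, hH0, zero_add]
  by_cases hdep : ∃ c : ℝ, y = c • x
  · obtain ⟨c, hc⟩ := hdep
    have hxx : H x = H x := rfl
    have hnegx : H (c • x) = if 0 ≤ c then c * H x else (-c) * H (-x) := by
      split_ifs with h
      · exact hhom c h x
      · have : c • x = (-c) • (-x) := by rw [smul_neg, neg_smul, neg_neg]
        rw [this, hhom (-c) (by linarith) (-x)]
    have hxy : x + y = (1 + c) • x := by rw [hc, add_smul, one_smul]
    have hnn := hneg x hx
    by_cases h1c : 0 ≤ 1 + c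
    · rw [hxy, hhom (1+c) h1c x, hc, hnegx]
      split_ifs with h
      · linarith [mul_le_mul_of_nonneg_left hxx.le h]
      · push_neg at h
        nlinarith
    · push_neg at h1c
      have : (1 + c) • x = (-(1+c)) • (-x) := by rw [smul_neg, neg_smul, neg_neg]
      rw [hxy, this, hhom (-(1+c)) (by linarith) (-x), hc, hnegx]
      split_ifs with h
      · nlinarith
      · push_neg at h
        nlinarith
  · push_neg at hdep
    exact sublinear_indep F hFnonneg H hhom hsmooth heq x y hx hdep

set_option maxHeartbeats 1000000 in
lemma support_repr
    (H : E3 → ℝ)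
    (hconv : ConvexOn ℝ Set.univ H)
    (hhom : ∀ t : ℝ, 0 ≤ t → ∀ x : E3, H (t • x) = t * H x)
    (hsmooth : ContDiffOn ℝ 2 H {(0 : E3)}ᶜ) :
    ∀ x : E3, H x = sSup ((fun y => ⟪x, y⟫) '' {y : E3 | ∀ x' : E3, ⟪x', y⟫ ≤ H x'}) := by
  have hH0 : H 0 = 0 := H_zero H hhom
  have hopen : IsOpen ({(0:E3)}ᶜ) := isOpen_compl_singleton
  -- supporting functional at each nonzero point
  have hsupport : ∀ x : E3, x ≠ 0 → ∃ y : E3, (∀ x' : E3, ⟪x', y⟫ ≤ H x') ∧ ⟪x, y⟫ = H x := by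
    intro x hx
    have hdiff : DifferentiableAt ℝ H x :=
      ((hsmooth.contDiffAt (hopen.mem_nhds hx)).differentiableAt (by norm_num))
    set L := fderiv ℝ H x with hL
    -- Euler: L x = H x
    have hcurve : HasDerivAt (fun t : ℝ => t • x) x 1 := by
      simpa using (hasDerivAt_id (1:ℝ)).smul_const x
    have hcomp : HasDerivAt (fun t : ℝ => H (t • x)) (L x) 1 := by
      have hF : HasFDerivAt H L ((1:ℝ) • x) := by rw [one_smul]; exact hdiff.hasFDerivAt
      exact hF.comp_hasDerivAt 1 hcurve
    have heqv : (fun t : ℝ => H (t • x)) =ᶠ[nhds 1] (fun t : ℝ => t * H x) := by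
      filter_upwards [Ioi_mem_nhds (zero_lt_one (α := ℝ))] with t ht
      exact hhom t (le_of_lt ht) x
    have h2 : HasDerivAt (fun t : ℝ => t * H x) (H x) 1 := by
      simpa using (hasDerivAt_id (1:ℝ)).mul_const (H x)
    have hEuler : L x = H x := by
      have h3 : HasDerivAt (fun t : ℝ => t * H x) (L x) 1 :=
        hcomp.congr_of_eventuallyEq heqv.symm
      exact h3.unique h2
    -- subgradient: ∀ z, L z ≤ H z
    have hsub : ∀ z : E3, L z ≤ H z := by
      intro z
      have hcurve2 : HasDerivAt (fun t : ℝ => x + t • (z - x)) (z - x) 0 := by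
        have := ((hasDerivAt_id (0:ℝ)).smul_const (z - x)).const_add x
        simpa using this
      have hψ : HasDerivAt (fun t : ℝ => H (x + t • (z - x))) (L (z - x)) 0 := by
        have hF : HasFDerivAt H L (x + (0:ℝ) • (z - x)) := by
          rw [zero_smul, add_zero]; exact hdiff.hasFDerivAt
        exact hF.comp_hasDerivAt 0 hcurve2
      have hslope := hasDerivAt_iff_tendsto_slope.mp hψ
      have hslope' : Filter.Tendsto (slope (fun t : ℝ => H (x + t • (z - x))) 0)
          (nhdsWithin 0 (Set.Ioi 0)) (nhds (L (z - x))) :=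
        hslope.mono_left (nhdsWithin_mono 0 (fun t ht => ne_of_gt ht))
      have hbound : ∀ᶠ t in nhdsWithin 0 (Set.Ioi (0:ℝ)),
          slope (fun t : ℝ => H (x + t • (z - x))) 0 t ≤ H z - H x := by
        filter_upwards [Ioo_mem_nhdsGT_of_mem
          (Set.mem_Ico.mpr ⟨le_refl (0:ℝ), zero_lt_one⟩)] with t ht
        have hconv2 := hconv.2 (Set.mem_univ x) (Set.mem_univ z)
          (by linarith [ht.2] : (0:ℝ) ≤ 1 - t) (le_of_lt ht.1) (by ring)
        have hpt : (1 - t) • x + t • z = x + t • (z - x) := by module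
        rw [hpt, smul_eq_mul, smul_eq_mul] at hconv2
        rw [slope_def_field]
        simp only [zero_smul, add_zero, sub_zero]
        rw [div_le_iff₀ ht.1]
        nlinarith [hconv2]
      have hLzx : L (z - x) ≤ H z - H x := le_of_tendsto hslope' hbound
      rw [map_sub, hEuler] at hLzx
      linarith
    -- the supporting point
    refine ⟨(InnerProductSpace.toDual ℝ E3).symm L, ?_, ?_⟩
    · intro x'
      rw [real_inner_comm, InnerProductSpace.toDual_symm_apply]
      exact hsub x'
    · rw [real_inner_comm, InnerProductSpace.toDual_symm_apply]
      exact hEuler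
  -- B is nonempty
  have hx₁ : (EuclideanSpace.single 0 (1:ℝ) : E3) ≠ 0 := by
    intro h
    have := congrArg (fun v : E3 => v 0) h
    simp [EuclideanSpace.single_apply] at this
  obtain ⟨y₀, hy₀B, _⟩ := hsupport _ hx₁
  intro x
  by_cases hx : x = 0
  · subst hx
    rw [hH0]
    have himg : (fun y => ⟪(0:E3), y⟫) '' {y : E3 | ∀ x' : E3, ⟪x', y⟫ ≤ H x'} = {0} := by
      apply Set.eq_singleton_iff_nonempty_unique_mem.mpr
      constructor
      · exact ⟨⟪(0:E3), y₀⟫, ⟨y₀, hy₀B, rfl⟩⟩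
      · rintro v ⟨y, _, rfl⟩
        exact inner_zero_left y
    rw [himg, csSup_singleton]
  · obtain ⟨y, hyB, hyval⟩ := hsupport x hx
    apply le_antisymm
    · rw [← hyval]
      apply le_csSup
      · refine ⟨H x, ?_⟩
        rintro v ⟨y', hy'B, rfl⟩
        exact hy'B x
      · exact ⟨y, hyB, rfl⟩
    · refine csSup_le ⟨⟪x, y⟫, ⟨y, hyB, rfl⟩⟩ ?_
      rintro v ⟨y', hy'B, rfl⟩
      rw [← hyval]
      calc ⟪x, y'⟫ ≤ H x := hy'B x
      _ = ⟪x, y⟫ := hyval.symm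

lemma exists_unit_ortho (a : E3) (ha : ‖a‖ = 1) : ∃ b : E3, ‖b‖ = 1 ∧ ⟪a, b⟫ = 0 := by
  have hane : a ≠ 0 := by intro h; rw [h, norm_zero] at ha; norm_num at ha
  obtain ⟨z, hzne, haz⟩ := exists_ortho a hane
  have hzpos : 0 < ‖z‖ := norm_pos_iff.mpr hzne
  refine ⟨‖z‖⁻¹ • z, ?_, ?_⟩
  · rw [norm_smul, norm_inv, norm_norm, inv_mul_cancel₀ (ne_of_gt hzpos)]
  · rw [real_inner_smul_right, haz, mul_zero]

set_option maxHeartbeats 1000000 in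
lemma circle_linear
    (F : E3 → E3 → ℝ) (H H' : E3 → ℝ)
    (hsmooth : ContDiffOn ℝ 2 H {(0 : E3)}ᶜ)
    (hsmooth' : ContDiffOn ℝ 2 H' {(0 : E3)}ᶜ)
    (heq : ∀ ω a b : E3, ‖ω‖ = 1 → ‖a‖ = 1 → ‖b‖ = 1 →
      ⟪ω, a⟫ = 0 → ⟪ω, b⟫ = 0 → ⟪a, b⟫ = 0 →
      ∀ φ : ℝ,
        H (Real.cos φ • a + Real.sin φ • b) +
          deriv (deriv (fun s : ℝ => H (Real.cos s • a + Real.sin s • b))) φ =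
        F ω (Real.cos φ • a + Real.sin φ • b))
    (heq' : ∀ ω a b : E3, ‖ω‖ = 1 → ‖a‖ = 1 → ‖b‖ = 1 →
      ⟪ω, a⟫ = 0 → ⟪ω, b⟫ = 0 → ⟪a, b⟫ = 0 →
      ∀ φ : ℝ,
        H' (Real.cos φ • a + Real.sin φ • b) +
          deriv (deriv (fun s : ℝ => H' (Real.cos s • a + Real.sin s • b))) φ =
        F ω (Real.cos φ • a + Real.sin φ • b))
    (a b : E3) (ha : ‖a‖ = 1) (hb : ‖b‖ = 1) (hab : ⟪a, b⟫ = 0) :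
    ∀ φ : ℝ,
      H' (Real.cos φ • a + Real.sin φ • b) - H (Real.cos φ • a + Real.sin φ • b)
        = (H' a - H a) * Real.cos φ + (H' b - H b) * Real.sin φ := by
  obtain ⟨ω, hω, hωa, hωb⟩ := exists_pole a b ha hb hab
  set g : ℝ → ℝ := fun s : ℝ => H (Real.cos s • a + Real.sin s • b) with hgdef
  set g' : ℝ → ℝ := fun s : ℝ => H' (Real.cos s • a + Real.sin s • b) with hg'def
  have hg2 : ContDiff ℝ 2 g := circle_contDiff H hsmooth a b ha hb hab
  have hg'2 : ContDiff ℝ 2 g' := circle_contDiff H' hsmooth' a b ha hb hab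
  set d : ℝ → ℝ := fun s => g' s - g s with hddef
  have hd2 : ContDiff ℝ 2 d := hg'2.sub hg2
  have hd1 : deriv d = fun s => deriv g' s - deriv g s :=
    funext fun s => deriv_sub (cd2_diff hg'2 s) (cd2_diff hg2 s)
  have hdd2 : ∀ s, deriv (deriv d) s = deriv (deriv g') s - deriv (deriv g) s := by
    intro s
    rw [hd1]
    exact deriv_sub (cd2_deriv_diff hg'2 s) (cd2_deriv_diff hg2 s)
  have hzero : ∀ s, d s + deriv (deriv d) s = 0 := by
    intro s
    rw [hdd2]
    have e1 := heq ω a b hω ha hb hωa hωb hab s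
    have e2 := heq' ω a b hω ha hb hωa hωb hab s
    simp only [hddef, hgdef, hg'def]
    linarith
  have hrep := ode_unique hd2 hzero
  have hd0 : d 0 = H' a - H a := by
    simp [hddef, hgdef, hg'def]
  have hdhalf : d (π/2) = H' b - H b := by
    simp [hddef, hgdef, hg'def, Real.cos_pi_div_two, Real.sin_pi_div_two]
  have hderiv0 : deriv d 0 = H' b - H b := by
    have := hrep (π/2)
    rw [Real.cos_pi_div_two, Real.sin_pi_div_two, hdhalf] at this
    linarith
  intro φ
  have := hrep φ
  rw [hd0, hderiv0] at this
  simpa [hddef, hgdef, hg'def] using this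

set_option maxHeartbeats 1000000 in
lemma diff_is_linear
    (F : E3 → E3 → ℝ) (H H' : E3 → ℝ)
    (hhom : ∀ t : ℝ, 0 ≤ t → ∀ x : E3, H (t • x) = t * H x)
    (hhom' : ∀ t : ℝ, 0 ≤ t → ∀ x : E3, H' (t • x) = t * H' x)
    (hsmooth : ContDiffOn ℝ 2 H {(0 : E3)}ᶜ)
    (hsmooth' : ContDiffOn ℝ 2 H' {(0 : E3)}ᶜ)
    (heq : ∀ ω a b : E3, ‖ω‖ = 1 → ‖a‖ = 1 → ‖b‖ = 1 →
      ⟪ω, a⟫ = 0 → ⟪ω, b⟫ = 0 → ⟪a, b⟫ = 0 →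
      ∀ φ : ℝ,
        H (Real.cos φ • a + Real.sin φ • b) +
          deriv (deriv (fun s : ℝ => H (Real.cos s • a + Real.sin s • b))) φ =
        F ω (Real.cos φ • a + Real.sin φ • b))
    (heq' : ∀ ω a b : E3, ‖ω‖ = 1 → ‖a‖ = 1 → ‖b‖ = 1 →
      ⟪ω, a⟫ = 0 → ⟪ω, b⟫ = 0 → ⟪a, b⟫ = 0 →
      ∀ φ : ℝ,
        H' (Real.cos φ • a + Real.sin φ • b) +
          deriv (deriv (fun s : ℝ => H' (Real.cos s • a + Real.sin s • b))) φ =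
        F ω (Real.cos φ • a + Real.sin φ • b)) :
    ∃ a₀ : E3, ∀ x : E3, H' x = H x + ⟪a₀, x⟫ := by
  set D : E3 → ℝ := fun v => H' v - H v with hDdef
  have key := circle_linear F H H' hsmooth hsmooth' heq heq'
  have hD0 : D 0 = 0 := by
    simp [hDdef, H_zero H hhom, H_zero H' hhom']
  have hDneg : ∀ a : E3, ‖a‖ = 1 → D (-a) = -D a := by
    intro a ha
    obtain ⟨b, hb, hab⟩ := exists_unit_ortho a ha
    have := key a b ha hb hab π
    rw [Real.cos_pi, Real.sin_pi] at this
    simp only [zero_smul, add_zero, neg_smul, one_smul] at this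
    simp only [hDdef]
    linarith
  have hDsmul : ∀ (c : ℝ) (v : E3), ‖v‖ = 1 → D (c • v) = c * D v := by
    intro c v hv
    by_cases hc : 0 ≤ c
    · simp only [hDdef]
      rw [hhom c hc, hhom' c hc]
      ring
    · push_neg at hc
      have h1 : c • v = (-c) • (-v) := by rw [smul_neg, neg_smul, neg_neg]
      have h2 : D ((-c) • (-v)) = (-c) * D (-v) := by
        simp only [hDdef]
        rw [hhom (-c) (by linarith), hhom' (-c) (by linarith)]
        ring
      rw [h1, h2, hDneg v hv]
      ring
  have hadd : ∀ u w : E3, ⟪u, w⟫ = 0 → D (u + w) = D u + D w := by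
    intro u w huw
    by_cases hu : u = 0
    · rw [hu, zero_add, hD0, zero_add]
    by_cases hw : w = 0
    · rw [hw, add_zero, hD0, add_zero]
    have hupos : 0 < ‖u‖ := norm_pos_iff.mpr hu
    have hwpos : 0 < ‖w‖ := norm_pos_iff.mpr hw
    set a : E3 := ‖u‖⁻¹ • u with haa
    set b : E3 := ‖w‖⁻¹ • w with hbb
    have ha : ‖a‖ = 1 := by
      rw [haa, norm_smul, norm_inv, norm_norm, inv_mul_cancel₀ (ne_of_gt hupos)]
    have hb : ‖b‖ = 1 := by
      rw [hbb, norm_smul, norm_inv, norm_norm, inv_mul_cancel₀ (ne_of_gt hwpos)]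
    have hab : ⟪a, b⟫ = 0 := by
      rw [haa, hbb, real_inner_smul_left, real_inner_smul_right, huw, mul_zero, mul_zero]
    have hua : u = ‖u‖ • a := by
      rw [haa, smul_smul, mul_inv_cancel₀ (ne_of_gt hupos), one_smul]
    have hwb : w = ‖w‖ • b := by
      rw [hbb, smul_smul, mul_inv_cancel₀ (ne_of_gt hwpos), one_smul]
    clear_value a b
    set ρ : ℝ := ‖u + w‖ with hρ
    have hρsq : ρ ^ 2 = ‖u‖ ^ 2 + ‖w‖ ^ 2 := by
      rw [hρ, norm_add_sq_real, huw]; ring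
    have hρpos : 0 < ρ := by
      have h1 : 0 < ρ ^ 2 := by nlinarith
      have h2 : 0 ≤ ρ := by rw [hρ]; exact norm_nonneg _
      nlinarith
    clear_value ρ
    have huρ : ‖u‖ < ρ := by nlinarith
    set σ : ℝ := Real.arccos (‖u‖ / ρ) with hσ
    clear_value σ
    have hd1 : ‖u‖ / ρ < 1 := by rw [div_lt_one hρpos]; linarith
    have hd2 : -1 < ‖u‖ / ρ := by
      have : 0 < ‖u‖ / ρ := div_pos hupos hρpos
      linarith
    have hcosσ : Real.cos σ = ‖u‖ / ρ := by
      rw [hσ]; exact Real.cos_arccos (le_of_lt hd2) (le_of_lt hd1)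
    have hsinσ : Real.sin σ = ‖w‖ / ρ := by
      rw [hσ, Real.sin_arccos]
      have e : 1 - (‖u‖ / ρ) ^ 2 = (‖w‖ / ρ) ^ 2 := by
        field_simp
        linarith [hρsq]
      rw [e]
      exact Real.sqrt_sq (le_of_lt (div_pos hwpos hρpos))
    have hsum : u + w = ρ • (Real.cos σ • a + Real.sin σ • b) := by
      have e1 : ρ * Real.cos σ = ‖u‖ := by rw [hcosσ]; field_simp
      have e2 : ρ * Real.sin σ = ‖w‖ := by rw [hsinσ]; field_simp
      rw [smul_add, smul_smul, smul_smul, e1, e2, ← hua, ← hwb]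
    have hcircle : ‖Real.cos σ • a + Real.sin σ • b‖ = 1 := circle_norm a b ha hb hab σ
    calc D (u + w) = ρ * D (Real.cos σ • a + Real.sin σ • b) := by
          rw [hsum]; exact hDsmul ρ _ hcircle
    _ = ρ * ((D a) * Real.cos σ + (D b) * Real.sin σ) := by
          have := key a b ha hb hab σ
          simp only [hDdef] at this ⊢
          rw [this]
    _ = ‖u‖ * D a + ‖w‖ * D b := by
          rw [hcosσ, hsinσ]; field_simp
    _ = D u + D w := by
          conv_rhs => rw [hua, hwb]
          rw [hDsmul _ _ ha, hDsmul _ _ hb]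
  -- basis decomposition
  set e : Fin 3 → E3 := fun i => EuclideanSpace.single i (1:ℝ) with hedef
  have he_norm : ∀ i, ‖e i‖ = 1 := by
    intro i
    rw [hedef, EuclideanSpace.norm_single, norm_one]
  have he_apply : ∀ i j, e i j = if i = j then 1 else 0 := by
    intro i j
    rw [hedef]
    simp [EuclideanSpace.single_apply, eq_comm]
  have hdecomp : ∀ x : E3, x = x 0 • e 0 + x 1 • e 1 + x 2 • e 2 := by
    intro x
    apply PiLp.ext
    intro i
    fin_cases i <;>
      simp [he_apply, PiLp.add_apply, PiLp.smul_apply]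
  set a₀ : E3 := D (e 0) • e 0 + D (e 1) • e 1 + D (e 2) • e 2 with ha₀
  refine ⟨a₀, fun x => ?_⟩
  have horth12 : ⟪x 1 • e 1, x 2 • e 2⟫ = 0 := by
    rw [real_inner_smul_left, real_inner_smul_right, inner3]
    simp [he_apply]
  have horth0 : ⟪x 0 • e 0, x 1 • e 1 + x 2 • e 2⟫ = 0 := by
    rw [real_inner_smul_left, inner_add_right, inner3, inner3]
    simp [he_apply, PiLp.add_apply, PiLp.smul_apply]
  have hDx : D x = x 0 * D (e 0) + x 1 * D (e 1) + x 2 * D (e 2) := by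
    conv_lhs => rw [hdecomp x]
    rw [show x 0 • e 0 + x 1 • e 1 + x 2 • e 2 = x 0 • e 0 + (x 1 • e 1 + x 2 • e 2) by abel]
    rw [hadd _ _ horth0, hadd _ _ horth12,
      hDsmul _ _ (he_norm 0), hDsmul _ _ (he_norm 1), hDsmul _ _ (he_norm 2)]
    ring
  have hinner : ⟪a₀, x⟫ = D (e 0) * x 0 + D (e 1) * x 1 + D (e 2) * x 2 := by
    rw [inner3, ha₀]
    simp [he_apply, PiLp.add_apply, PiLp.smul_apply]
  have := hDx
  simp only [hDdef] at this hinner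
  rw [hinner]
  linear_combination this

theorem spherical_solution_gives_convex_body
    (F : EuclideanSpace ℝ (Fin 3) → EuclideanSpace ℝ (Fin 3) → ℝ)
    (hFcont : ContinuousOn (fun p : EuclideanSpace ℝ (Fin 3) × EuclideanSpace ℝ (Fin 3) => F p.1 p.2)
      {p | ‖p.1‖ = 1 ∧ ‖p.2‖ = 1 ∧ ⟪p.1, p.2⟫ = 0})
    (hFnonneg : ∀ ω v : EuclideanSpace ℝ (Fin 3), ‖ω‖ = 1 → ‖v‖ = 1 → ⟪ω, v⟫ = 0 → 0 ≤ F ω v)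
    (H : EuclideanSpace ℝ (Fin 3) → ℝ)
    (hhom : ∀ t : ℝ, 0 ≤ t → ∀ x : EuclideanSpace ℝ (Fin 3), H (t • x) = t * H x)
    (hsmooth : ContDiffOn ℝ 2 H {(0 : EuclideanSpace ℝ (Fin 3))}ᶜ)
    (heq : ∀ ω a b : EuclideanSpace ℝ (Fin 3), ‖ω‖ = 1 → ‖a‖ = 1 → ‖b‖ = 1 →
      ⟪ω, a⟫ = 0 → ⟪ω, b⟫ = 0 → ⟪a, b⟫ = 0 →
      ∀ φ : ℝ,
        H (Real.cos φ • a + Real.sin φ • b) +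
          deriv (deriv (fun s : ℝ => H (Real.cos s • a + Real.sin s • b))) φ =
        F ω (Real.cos φ • a + Real.sin φ • b)) :
    (ConvexOn ℝ Set.univ H ∧
      ∀ x : EuclideanSpace ℝ (Fin 3),
        H x = sSup ((fun y => ⟪x, y⟫) ''
          {y : EuclideanSpace ℝ (Fin 3) | ∀ x' : EuclideanSpace ℝ (Fin 3), ⟪x', y⟫ ≤ H x'})) ∧
    (∀ H' : EuclideanSpace ℝ (Fin 3) → ℝ,
      (∀ t : ℝ, 0 ≤ t → ∀ x : EuclideanSpace ℝ (Fin 3), H' (t • x) = t * H' x) →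
      ContDiffOn ℝ 2 H' {(0 : EuclideanSpace ℝ (Fin 3))}ᶜ →
      (∀ ω a b : EuclideanSpace ℝ (Fin 3), ‖ω‖ = 1 → ‖a‖ = 1 → ‖b‖ = 1 →
        ⟪ω, a⟫ = 0 → ⟪ω, b⟫ = 0 → ⟪a, b⟫ = 0 →
        ∀ φ : ℝ,
          H' (Real.cos φ • a + Real.sin φ • b) +
            deriv (deriv (fun s : ℝ => H' (Real.cos s • a + Real.sin s • b))) φ =
          F ω (Real.cos φ • a + Real.sin φ • b)) →
      ∃ a₀ : EuclideanSpace ℝ (Fin 3),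
        ∀ x : EuclideanSpace ℝ (Fin 3), H' x = H x + ⟪a₀, x⟫) := by
  have hsub := sublinear_all F hFnonneg H hhom hsmooth heq
  have hconv : ConvexOn ℝ Set.univ H := by
    refine ⟨convex_univ, ?_⟩
    intro x _ y _ a b ha hb hab
    calc H (a • x + b • y) ≤ H (a • x) + H (b • y) := hsub _ _
    _ = a • H x + b • H y := by
        rw [hhom a ha, hhom b hb, smul_eq_mul, smul_eq_mul]
  exact ⟨⟨hconv, support_repr H hconv hhom hsmooth⟩,
    fun H' hhom' hsmooth' heq' =>
      diff_is_linear F H H' hhom hhom' hsmooth hsmooth' heq heq'⟩
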